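/- Let 1 ≤ p < ∞, let V be a Banach space, and let δ : 𝔽 ⊕ V → V be a linear map satisfying ‖δ(c,v)‖ ≤ (|c|^p + ‖v‖^p)^{1/p} for all c ∈ 𝔽, v ∈ V. Then there exists a unique linear contraction θ : ℓ^p → V such that θ(c, a₀, a₁, …) = δ(c, θ(a₀, a₁, …)) for all c ∈ 𝔽 and (a₀,a₁,…) ∈ ℓ^p. -/

import Mathlib

open ENNReal Filter

section shiftaux

variable {𝕜 : Type*} [RCLike 𝕜] {p : ℝ≥0∞} [Fact (1 ≤ p)]

lemma stmt11_hpT (hp' : p ≠ ∞) : 0 < p.toReal :=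
  ENNReal.toReal_pos (lt_of_lt_of_le zero_lt_one Fact.out).ne' hp'

lemma stmt11_hp1 (hp' : p ≠ ∞) : 1 ≤ p.toReal := by
  have h := ENNReal.toReal_mono hp' (Fact.out : 1 ≤ p)
  simpa using h

lemma stmt11_rpow_cancel (hp' : p ≠ ∞) {x : ℝ} (hx : 0 ≤ x) :
    (x ^ p.toReal) ^ (1 / p.toReal) = x := by
  rw [← Real.rpow_mul hx, mul_one_div_cancel (stmt11_hpT hp').ne', Real.rpow_one]

lemma stmt11_shift_mem (hp' : p ≠ ∞) (f : lp (fun _ : ℕ => 𝕜) p) :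
    Memℓp (fun n => (f : ℕ → 𝕜) (n + 1)) p :=
  memℓp_gen (((lp.memℓp f).summable (stmt11_hpT hp')).comp_injective
    (fun a b h => by simpa using h : Function.Injective (fun n : ℕ => n + 1)))

noncomputable def stmt11_shiftL (hp' : p ≠ ∞) :
    lp (fun _ : ℕ => 𝕜) p →ₗ[𝕜] lp (fun _ : ℕ => 𝕜) p where
  toFun f := ⟨fun n => (f : ℕ → 𝕜) (n + 1), stmt11_shift_mem hp' f⟩
  map_add' f g := lp.ext (funext fun n => by
    simp [lp.coeFn_add]; rfl)
  map_smul' c f := lp.ext (funext fun n => by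
    simp [lp.coeFn_smul])

lemma stmt11_norm_split (hp' : p ≠ ∞) (f : lp (fun _ : ℕ => 𝕜) p) :
    ‖f‖ ^ p.toReal = ‖(f : ℕ → 𝕜) 0‖ ^ p.toReal + ‖stmt11_shiftL hp' f‖ ^ p.toReal := by
  rw [lp.norm_rpow_eq_tsum (stmt11_hpT hp') f, lp.norm_rpow_eq_tsum (stmt11_hpT hp')]
  exact Summable.tsum_eq_zero_add ((lp.memℓp f).summable (stmt11_hpT hp'))

lemma stmt11_norm_shift_le (hp' : p ≠ ∞) (f : lp (fun _ : ℕ => 𝕜) p) :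
    ‖stmt11_shiftL hp' f‖ ≤ ‖f‖ := by
  have hp := stmt11_hpT hp'
  rw [← Real.rpow_le_rpow_iff (norm_nonneg _) (norm_nonneg _) hp, stmt11_norm_split hp' f]
  have : 0 ≤ ‖(f : ℕ → 𝕜) 0‖ ^ p.toReal := Real.rpow_nonneg (norm_nonneg _) _
  linarith

noncomputable def stmt11_S (hp' : p ≠ ∞) :
    lp (fun _ : ℕ => 𝕜) p →L[𝕜] lp (fun _ : ℕ => 𝕜) p :=
  LinearMap.mkContinuous (stmt11_shiftL hp') 1
    (fun f => by simpa using stmt11_norm_shift_le hp' f)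

@[simp] lemma stmt11_S_apply (hp' : p ≠ ∞) (f : lp (fun _ : ℕ => 𝕜) p) (n : ℕ) :
    (stmt11_S hp' f : ℕ → 𝕜) n = (f : ℕ → 𝕜) (n + 1) := rfl

lemma stmt11_norm_split' (hp' : p ≠ ∞) (f : lp (fun _ : ℕ => 𝕜) p) :
    ‖f‖ ^ p.toReal = ‖(f : ℕ → 𝕜) 0‖ ^ p.toReal + ‖stmt11_S hp' f‖ ^ p.toReal :=
  stmt11_norm_split hp' f

noncomputable def stmt11_e0 (hp' : p ≠ ∞) : lp (fun _ : ℕ => 𝕜) p →L[𝕜] 𝕜 :=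
  LinearMap.mkContinuous
    { toFun := fun f => (f : ℕ → 𝕜) 0
      map_add' := fun f g => by simp [lp.coeFn_add]
      map_smul' := fun c f => by simp [lp.coeFn_smul] }
    1 (fun f => by
      show ‖(f : ℕ → 𝕜) 0‖ ≤ 1 * ‖f‖
      simpa using lp.norm_apply_le_norm (lt_of_lt_of_le zero_lt_one Fact.out).ne' f 0)

@[simp] lemma stmt11_e0_apply (hp' : p ≠ ∞) (f : lp (fun _ : ℕ => 𝕜) p) :
    stmt11_e0 hp' f = (f : ℕ → 𝕜) 0 := rfl

end shiftaux

set_option maxHeartbeats 1000000 in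

/-- universal property of `ℓ^p`, `1 ≤ p < ∞`: given a Banach space `V`
and a linear map `δ : 𝕜 ⊕ V → V` with `‖δ(c,v)‖ ≤ (|c|^p + ‖v‖^p)^{1/p}`, there is a
unique linear contraction `θ : ℓ^p → V` with `θ(c, a₀, a₁, …) = δ(c, θ(a₀, a₁, …))`. -/
theorem stmt_11 {𝕜 V : Type*} [RCLike 𝕜] [NormedAddCommGroup V] [NormedSpace 𝕜 V]
    [CompleteSpace V]
    (p : ℝ≥0∞) [Fact (1 ≤ p)] (hp' : p ≠ ∞)
    (δ : 𝕜 × V →ₗ[𝕜] V)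
    (hδ : ∀ a : 𝕜 × V, ‖δ a‖ ≤ (‖a.1‖ ^ p.toReal + ‖a.2‖ ^ p.toReal) ^ (1/p.toReal))
    (γ : 𝕜 × lp (fun _ : ℕ => 𝕜) p → lp (fun _ : ℕ => 𝕜) p)
    (hγ0 : ∀ ca : 𝕜 × lp (fun _ : ℕ => 𝕜) p, (γ ca : ℕ → 𝕜) 0 = ca.1)
    (hγs : ∀ (ca : 𝕜 × lp (fun _ : ℕ => 𝕜) p) (n : ℕ),
      (γ ca : ℕ → 𝕜) (n + 1) = (ca.2 : ℕ → 𝕜) n) :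
    ∃! θ : lp (fun _ : ℕ => 𝕜) p →L[𝕜] V, ‖θ‖ ≤ 1 ∧
      ∀ ca : 𝕜 × lp (fun _ : ℕ => 𝕜) p, θ (γ ca) = δ (ca.1, θ ca.2) := by
  have hpT : 0 < p.toReal := stmt11_hpT hp'
  -- δ is bounded
  have hb : ∀ a : 𝕜 × V, ‖δ a‖ ≤ 2 * ‖a‖ := by
    intro a
    refine (hδ a).trans ?_
    have h1 : ‖a.1‖ ≤ ‖a‖ := norm_fst_le a
    have h2 : ‖a.2‖ ≤ ‖a‖ := norm_snd_le a
    have e1 : (‖a.1‖ ^ p.toReal + ‖a.2‖ ^ p.toReal) ^ (1 / p.toReal) ≤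
        (2 * ‖a‖ ^ p.toReal) ^ (1 / p.toReal) := by
      apply Real.rpow_le_rpow (by positivity)
      · have := Real.rpow_le_rpow (norm_nonneg a.1) h1 hpT.le
        have := Real.rpow_le_rpow (norm_nonneg a.2) h2 hpT.le
        nlinarith [Real.rpow_le_rpow (norm_nonneg a.1) h1 hpT.le,
          Real.rpow_le_rpow (norm_nonneg a.2) h2 hpT.le]
      · positivity
    refine e1.trans ?_
    rw [Real.mul_rpow (by norm_num) (by positivity), stmt11_rpow_cancel hp' (norm_nonneg a)]
    have h2le : (2:ℝ) ^ (1/p.toReal) ≤ 2 := by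
      have : (2:ℝ) ^ (1/p.toReal) ≤ 2 ^ (1:ℝ) :=
        Real.rpow_le_rpow_of_exponent_le one_le_two
          ((div_le_one hpT).mpr (stmt11_hp1 hp'))
      simpa using this
    exact mul_le_mul_of_nonneg_right h2le (norm_nonneg a)
  set δC : 𝕜 × V →L[𝕜] V := δ.mkContinuous 2 hb with hδC
  have hδCa : ∀ a : 𝕜 × V, δC a = δ a := fun a => rfl
  have hδ0 : ∀ w : V, ‖δC ((0:𝕜), w)‖ ≤ ‖w‖ := by
    intro w
    have h : ‖δ ((0:𝕜), w)‖ ≤ (‖(0:𝕜)‖ ^ p.toReal + ‖w‖ ^ p.toReal) ^ (1/p.toReal) := hδ _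
    rw [norm_zero, Real.zero_rpow hpT.ne', zero_add,
      stmt11_rpow_cancel hp' (norm_nonneg w)] at h
    exact h
  -- the approximating maps
  set S := stmt11_S (𝕜 := 𝕜) hp' with hS
  let T : ℕ → (lp (fun _ : ℕ => 𝕜) p →L[𝕜] V) := fun N =>
    Nat.rec 0 (fun _ Tn => δC.comp ((stmt11_e0 hp').prod (Tn.comp S))) N
  have hT0 : ∀ f, T 0 f = 0 := fun _ => rfl
  have hTs : ∀ N f, T (N+1) f = δC ((f : ℕ → 𝕜) 0, T N (S f)) := fun N f => rfl
  -- contraction bound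
  have hcontr : ∀ N f, ‖T N f‖ ≤ ‖f‖ := by
    intro N
    induction N with
    | zero => intro f; rw [hT0]; simp
    | succ n ih =>
      intro f
      rw [hTs]
      refine (hδ _).trans ?_
      have step : ‖T n (S f)‖ ^ p.toReal ≤ ‖S f‖ ^ p.toReal :=
        Real.rpow_le_rpow (norm_nonneg _) (ih (S f)) hpT.le
      calc (‖(f : ℕ → 𝕜) 0‖ ^ p.toReal + ‖T n (S f)‖ ^ p.toReal) ^ (1/p.toReal)
          ≤ (‖(f : ℕ → 𝕜) 0‖ ^ p.toReal + ‖S f‖ ^ p.toReal) ^ (1/p.toReal) := by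
            apply Real.rpow_le_rpow (by positivity) (by linarith) (by positivity)
        _ = (‖f‖ ^ p.toReal) ^ (1/p.toReal) := by rw [← stmt11_norm_split' hp' f]
        _ = ‖f‖ := stmt11_rpow_cancel hp' (norm_nonneg f)
  -- iterated shift
  let Sp : ℕ → (lp (fun _ : ℕ => 𝕜) p →L[𝕜] lp (fun _ : ℕ => 𝕜) p) := fun N =>
    Nat.rec (ContinuousLinearMap.id 𝕜 _) (fun _ A => A.comp S) N
  have hSp0 : ∀ f, Sp 0 f = f := fun _ => rfl
  have hSps : ∀ N f, Sp (N+1) f = Sp N (S f) := fun N f => rfl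
  have hSp_apply : ∀ N f k, (Sp N f : ℕ → 𝕜) k = (f : ℕ → 𝕜) (k + N) := by
    intro N
    induction N with
    | zero =>
      intro f k
      rw [hSp0]
      rfl
    | succ n ih =>
      intro f k
      rw [hSps, ih (S f) k, stmt11_S_apply]
      rfl
  -- difference estimate
  have hdiff : ∀ N M f, ‖T (N + M) f - T N f‖ ≤ ‖Sp N f‖ := by
    intro N
    induction N with
    | zero =>
      intro M f
      rw [hT0, hSp0, sub_zero]
      simpa using hcontr M f
    | succ n ih =>
      intro M f
      have hadd : n + 1 + M = (n + M) + 1 := by omega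
      rw [hadd, hTs, hTs]
      have hsub : δC ((f : ℕ → 𝕜) 0, T (n + M) (S f)) - δC ((f : ℕ → 𝕜) 0, T n (S f)) =
          δC ((0:𝕜), T (n + M) (S f) - T n (S f)) := by
        rw [← map_sub]
        congr 1
        simp [Prod.mk_sub_mk]
      rw [hsub]
      refine (hδ0 _).trans ?_
      rw [hSps]
      exact ih M (S f)
  -- tails tend to zero
  have htail : ∀ f : lp (fun _ : ℕ => 𝕜) p,
      Tendsto (fun N => ‖Sp N f‖) atTop (nhds 0) := by
    intro f
    have hnorm : ∀ N, ‖Sp N f‖ =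
        (∑' k, ‖(f : ℕ → 𝕜) (k + N)‖ ^ p.toReal) ^ (1/p.toReal) := by
      intro N
      rw [lp.norm_eq_tsum_rpow hpT]
      congr 1
      exact tsum_congr fun k => by rw [hSp_apply N f k]
    have h1 := tendsto_sum_nat_add (fun k => ‖(f : ℕ → 𝕜) k‖ ^ p.toReal)
    have h2 := h1.rpow_const (p := 1/p.toReal) (Or.inr (by positivity))
    rw [Real.zero_rpow (by positivity : (0:ℝ) < 1/p.toReal).ne'] at h2
    exact h2.congr fun N => (hnorm N).symm
  -- Cauchy and limit
  have hlim : ∀ f : lp (fun _ : ℕ => 𝕜) p,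
      ∃ v : V, Tendsto (fun N => T N f) atTop (nhds v) := by
    intro f
    apply cauchySeq_tendsto_of_complete
    apply cauchySeq_of_le_tendsto_0 (fun N => 2 * ‖Sp N f‖)
    · intro n m N hn hm
      obtain ⟨k, rfl⟩ := Nat.exists_eq_add_of_le hn
      obtain ⟨l, rfl⟩ := Nat.exists_eq_add_of_le hm
      calc dist (T (N + k) f) (T (N + l) f)
          ≤ dist (T (N + k) f) (T N f) + dist (T N f) (T (N + l) f) := dist_triangle _ _ _
        _ ≤ ‖Sp N f‖ + ‖Sp N f‖ := by
            rw [dist_eq_norm, dist_eq_norm']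
            exact add_le_add (hdiff N k f) (hdiff N l f)
        _ = 2 * ‖Sp N f‖ := by ring
    · have h2 := (htail f).const_mul (2:ℝ)
      rwa [mul_zero] at h2
  choose L hL using hlim
  -- linearity of the limit
  have hLadd : ∀ f g, L (f + g) = L f + L g := by
    intro f g
    refine tendsto_nhds_unique (hL (f + g)) ?_
    exact ((hL f).add (hL g)).congr fun N => (map_add (T N) f g).symm
  have hLsmul : ∀ (c : 𝕜) f, L (c • f) = c • L f := by
    intro c f
    refine tendsto_nhds_unique (hL (c • f)) ?_
    exact ((hL f).const_smul c).congr fun N => (map_smul (T N) c f).symm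
  have hLnorm : ∀ f, ‖L f‖ ≤ ‖f‖ := fun f =>
    le_of_tendsto (hL f).norm (Filter.Eventually.of_forall fun N => hcontr N f)
  set θlin : lp (fun _ : ℕ => 𝕜) p →ₗ[𝕜] V :=
    { toFun := L
      map_add' := hLadd
      map_smul' := hLsmul } with hθlin
  set θ : lp (fun _ : ℕ => 𝕜) p →L[𝕜] V :=
    LinearMap.mkContinuous θlin 1 (fun f => by show ‖L f‖ ≤ 1 * ‖f‖; simpa using hLnorm f) with hθ
  have hθa : ∀ f, θ f = L f := fun _ => rfl
  -- recurrence
  have hrec : ∀ ca : 𝕜 × lp (fun _ : ℕ => 𝕜) p, θ (γ ca) = δ (ca.1, θ ca.2) := by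
    intro ca
    have hSγ : S (γ ca) = ca.2 := by
      apply lp.ext
      funext n
      rw [stmt11_S_apply]
      exact hγs ca n
    have hA : ∀ N, T (N + 1) (γ ca) = δC (ca.1, T N ca.2) := by
      intro N
      rw [hTs, hγ0 ca, hSγ]
    have l1 : Tendsto (fun N => T (N + 1) (γ ca)) atTop (nhds (L (γ ca))) :=
      (hL (γ ca)).comp (tendsto_add_atTop_nat 1)
    have l2 : Tendsto (fun N => δC (ca.1, T N ca.2)) atTop (nhds (δC (ca.1, L ca.2))) :=
      (δC.continuous.tendsto _).comp (tendsto_const_nhds.prodMk_nhds (hL ca.2))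
    have := tendsto_nhds_unique (l1.congr fun N => hA N) l2
    rw [hθa, hθa, this, hδCa]
  -- uniqueness
  have hsingle0 : ∀ c : 𝕜, γ (c, 0) = lp.single p 0 c := by
    intro c
    apply lp.ext
    funext k
    cases k with
    | zero => rw [hγ0 (c, 0), lp.single_apply_self]
    | succ k =>
      rw [hγs (c, 0) k, lp.single_apply_ne (E := fun _ : ℕ => 𝕜) p 0 c (Nat.succ_ne_zero k : k + 1 ≠ 0)]
      exact congrFun (lp.coeFn_zero (fun _ : ℕ => 𝕜) p) k
  have hsingleS : ∀ (n : ℕ) (c : 𝕜), γ (0, lp.single p n c) = lp.single p (n+1) c := by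
    intro n c
    apply lp.ext
    funext k
    cases k with
    | zero =>
      rw [hγ0 (0, lp.single p n c),
        lp.single_apply_ne (E := fun _ : ℕ => 𝕜) p (n+1) c (by omega : (0:ℕ) ≠ n+1)]
    | succ k =>
      rw [hγs (0, lp.single p n c) k]
      by_cases hk : k = n
      · subst hk
        rw [lp.single_apply_self, lp.single_apply_self]
      · rw [lp.single_apply_ne (E := fun _ : ℕ => 𝕜) p n c hk,
          lp.single_apply_ne (E := fun _ : ℕ => 𝕜) p (n+1) c (by omega : k+1 ≠ n+1)]
  have huniq : ∀ (Θ₁ Θ₂ : lp (fun _ : ℕ => 𝕜) p →L[𝕜] V),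
      (∀ ca, Θ₁ (γ ca) = δ (ca.1, Θ₁ ca.2)) → (∀ ca, Θ₂ (γ ca) = δ (ca.1, Θ₂ ca.2)) →
      Θ₁ = Θ₂ := by
    intro Θ₁ Θ₂ h₁ h₂
    have hsng : ∀ (n : ℕ) (c : 𝕜), Θ₁ (lp.single p n c) = Θ₂ (lp.single p n c) := by
      intro n
      induction n with
      | zero =>
        intro c
        rw [← hsingle0 c, h₁ (c, 0), h₂ (c, 0)]
        norm_num
      | succ n ih =>
        intro c
        rw [← hsingleS n c, h₁ (0, lp.single p n c), h₂ (0, lp.single p n c), ih c]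
    ext f
    have e₁ := (lp.hasSum_single hp' f).mapL Θ₁
    have e₂ := (lp.hasSum_single hp' f).mapL Θ₂
    have : (fun n => Θ₂ (lp.single p n ((f : ℕ → 𝕜) n))) =
        fun n => Θ₁ (lp.single p n ((f : ℕ → 𝕜) n)) := funext fun n => (hsng n _).symm
    rw [this] at e₂
    exact e₁.unique e₂
  refine ⟨θ, ⟨?_, hrec⟩, ?_⟩
  · exact LinearMap.mkContinuous_norm_le _ zero_le_one _
  · intro θ' hθ'
    exact huniq θ' θ hθ'.2 hrec
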